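/- For the seven-qubit state |ψ⟩₇ with real coefficients α₁, α₂, α₃, α₄ satisfying α₁²+α₂²+α₃²+α₄² = 1, the 3×3 matrix R†R built from the generalized R-matrix of ρ = |ψ⟩₇⟨ψ|₇ is diagonal, with (R†R)₁₁ = (R†R)₂₂ = 16(α₁² + α₃²)(α₂² + α₄²) + 48(α₁²α₄² + α₂²α₃²) and (R†R)₃₃ = 1 + 32α₁²α₃² + 32α₂²α₄², and all off-diagonal entries zero. -/

import Mathlib

open Matrix Complex Polynomial
open scoped ComplexOrder

noncomputable section

/-- The three Pauli matrices σ_x, σ_y, σ_z. -/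
def pauli : Fin 3 → Matrix (Fin 2) (Fin 2) ℂ :=
  ![!![0, 1; 1, 0], !![0, -Complex.I; Complex.I, 0], !![1, 0; 0, -1]]

/-- Kronecker product of `n` 2×2 matrices, as a matrix on `(Fin n → Fin 2)`. -/
def kron {n : ℕ} (M : Fin n → Matrix (Fin 2) (Fin 2) ℂ) :
    Matrix (Fin n → Fin 2) (Fin n → Fin 2) ℂ :=
  Matrix.of fun f g => ∏ k, M k (f k) (g k)

/-- The bit string 0000000. -/
def w₁ : Fin 7 → Fin 2 := ![0, 0, 0, 0, 0, 0, 0]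
/-- The bit string 0001111. -/
def w₂ : Fin 7 → Fin 2 := ![0, 0, 0, 1, 1, 1, 1]
/-- The bit string 1111000. -/
def w₃ : Fin 7 → Fin 2 := ![1, 1, 1, 1, 0, 0, 0]
/-- The bit string 1110111. -/
def w₄ : Fin 7 → Fin 2 := ![1, 1, 1, 0, 1, 1, 1]

/-- The seven-qubit state `|ψ⟩₇ = α₁|0000000⟩ + α₂|0001111⟩ + α₃|1111000⟩ + α₄|1110111⟩`. -/
def psi7 (α₁ α₂ α₃ α₄ : ℝ) : (Fin 7 → Fin 2) → ℂ := fun f =>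
  (if f = w₁ then (α₁ : ℂ) else 0) + (if f = w₂ then (α₂ : ℂ) else 0)
    + (if f = w₃ then (α₃ : ℂ) else 0) + (if f = w₄ then (α₄ : ℂ) else 0)

/-- The density matrix `ρ(f,g) = ψ(f)·conj(ψ(g))` of `|ψ⟩₇`. -/
def rho7 (α₁ α₂ α₃ α₄ : ℝ) : Matrix (Fin 7 → Fin 2) (Fin 7 → Fin 2) ℂ :=
  Matrix.of fun f g => psi7 α₁ α₂ α₃ α₄ f * (starRingEnd ℂ) (psi7 α₁ α₂ α₃ α₄ g)

/-- The reduced density matrix of region `A` (the seventh qubit): partial trace of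
`ρ` over the first six qubits. -/
def rhoA7 (α₁ α₂ α₃ α₄ : ℝ) : Matrix (Fin 2) (Fin 2) ℂ :=
  Matrix.of fun a a' =>
    ∑ b : Fin 6 → Fin 2, rho7 α₁ α₂ α₃ α₄ (Fin.snoc b a) (Fin.snoc b a')

/-- The generalized R-matrix of `ρ = |ψ⟩₇⟨ψ|₇`:
`R(I, j) = Re Tr(ρ · σ_{i₁}⊗⋯⊗σ_{i₆}⊗σ_j)`. -/
def Rmat7 (α₁ α₂ α₃ α₄ : ℝ) (I : Fin 6 → Fin 3) (j : Fin 3) : ℝ :=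
  (Matrix.trace (rho7 α₁ α₂ α₃ α₄ *
    kron (Fin.snoc (fun k : Fin 6 => pauli (I k)) (pauli j)))).re

/-- The 3×3 matrix `R†R`. -/
def RtR7 (α₁ α₂ α₃ α₄ : ℝ) : Matrix (Fin 3) (Fin 3) ℝ :=
  Matrix.of fun j j' =>
    ∑ I : Fin 6 → Fin 3, Rmat7 α₁ α₂ α₃ α₄ I j * Rmat7 α₁ α₂ α₃ α₄ I j'

/-! ### Auxiliary development -/

def wv : Fin 4 → (Fin 7 → Fin 2) := ![w₁, w₂, w₃, w₄]
def vv (α₁ α₂ α₃ α₄ : ℝ) : Fin 4 → ℝ := ![α₁, α₂, α₃, α₄]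
def S (x y u v : Fin 2) : ℂ := ∑ i : Fin 3, pauli i x y * pauli i u v

lemma psi7_eq (α₁ α₂ α₃ α₄ : ℝ) (f : Fin 7 → Fin 2) :
    psi7 α₁ α₂ α₃ α₄ f = ∑ a : Fin 4, if f = wv a then ((vv α₁ α₂ α₃ α₄ a : ℝ) : ℂ) else 0 := by
  simp [psi7, wv, vv, Fin.sum_univ_four, add_assoc]
  congr

lemma sum_supp (c : Fin 4 → ℂ) (h : (Fin 7 → Fin 2) → ℂ) :
    ∑ f : Fin 7 → Fin 2, (∑ a : Fin 4, if f = wv a then c a else 0) * h f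
      = ∑ a : Fin 4, c a * h (wv a) := by
  simp only [Finset.sum_mul, ite_mul, zero_mul]
  rw [Finset.sum_comm]
  simp [Finset.sum_ite_eq']

lemma trace_eq (α₁ α₂ α₃ α₄ : ℝ) (M : Fin 7 → Matrix (Fin 2) (Fin 2) ℂ) :
    Matrix.trace (rho7 α₁ α₂ α₃ α₄ * kron M)
      = ∑ a : Fin 4, ∑ b : Fin 4,
          ((vv α₁ α₂ α₃ α₄ a * vv α₁ α₂ α₃ α₄ b : ℝ) : ℂ) * ∏ k, M k (wv b k) (wv a k) := by
  have hconj : ∀ g, (starRingEnd ℂ) (psi7 α₁ α₂ α₃ α₄ g)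
      = ∑ b : Fin 4, if g = wv b then ((vv α₁ α₂ α₃ α₄ b : ℝ) : ℂ) else 0 := by
    intro g
    rw [psi7_eq]
    simp [map_sum, apply_ite]
  calc Matrix.trace (rho7 α₁ α₂ α₃ α₄ * kron M)
      = ∑ f : Fin 7 → Fin 2, ∑ g : Fin 7 → Fin 2,
          psi7 α₁ α₂ α₃ α₄ f * ((starRingEnd ℂ) (psi7 α₁ α₂ α₃ α₄ g) * kron M g f) := by
        simp [Matrix.trace, Matrix.diag, Matrix.mul_apply, rho7, mul_assoc]
    _ = ∑ a : Fin 4, ((vv α₁ α₂ α₃ α₄ a : ℝ) : ℂ) * ∑ g : Fin 7 → Fin 2,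
          (starRingEnd ℂ) (psi7 α₁ α₂ α₃ α₄ g) * kron M g (wv a) := by
        rw [Finset.sum_comm]
        have := sum_supp (fun a => ((vv α₁ α₂ α₃ α₄ a : ℝ) : ℂ))
          (fun f => ∑ g : Fin 7 → Fin 2, (starRingEnd ℂ) (psi7 α₁ α₂ α₃ α₄ g) * kron M g f)
        rw [← this]
        rw [Finset.sum_comm]
        congr 1; funext f
        rw [← psi7_eq, Finset.mul_sum]
    _ = ∑ a : Fin 4, ∑ b : Fin 4,
          ((vv α₁ α₂ α₃ α₄ a * vv α₁ α₂ α₃ α₄ b : ℝ) : ℂ) * ∏ k, M k (wv b k) (wv a k) := by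
        refine Finset.sum_congr rfl fun a _ => ?_
        simp only [hconj]
        rw [sum_supp (fun b => ((vv α₁ α₂ α₃ α₄ b : ℝ) : ℂ)) (fun g => kron M g (wv a)),
          Finset.mul_sum]
        refine Finset.sum_congr rfl fun b _ => ?_
        push_cast
        simp [kron]
        ring

lemma pauli_conj (i : Fin 3) (x y : Fin 2) : (starRingEnd ℂ) (pauli i x y) = pauli i y x := by
  fin_cases i <;> fin_cases x <;> fin_cases y <;> simp [pauli]

lemma trace_im (α₁ α₂ α₃ α₄ : ℝ) (J : Fin 7 → Fin 3) :
    (Matrix.trace (rho7 α₁ α₂ α₃ α₄ * kron (fun k => pauli (J k)))).im = 0 := by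
  rw [← Complex.conj_eq_iff_im, trace_eq]
  rw [map_sum, Finset.sum_comm]
  refine Finset.sum_congr rfl fun a _ => ?_
  rw [map_sum]
  refine Finset.sum_congr rfl fun b _ => ?_
  rw [_root_.map_mul, Complex.conj_ofReal, map_prod]
  simp only [pauli_conj]
  ring_nf


lemma sum_comm5 {M : Type*} [AddCommMonoid M]
    (f : (Fin 6 → Fin 3) → Fin 4 → Fin 4 → Fin 4 → Fin 4 → M) :
    ∑ I : Fin 6 → Fin 3, ∑ a : Fin 4, ∑ b : Fin 4, ∑ c : Fin 4, ∑ d : Fin 4, f I a b c d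
      = ∑ a : Fin 4, ∑ b : Fin 4, ∑ c : Fin 4, ∑ d : Fin 4, ∑ I : Fin 6 → Fin 3, f I a b c d := by
  rw [Finset.sum_comm]
  refine Finset.sum_congr rfl fun a _ => ?_
  rw [Finset.sum_comm]
  refine Finset.sum_congr rfl fun b _ => ?_
  rw [Finset.sum_comm]
  refine Finset.sum_congr rfl fun c _ => ?_
  rw [Finset.sum_comm]

lemma sum_kron (x y u v : Fin 7 → Fin 2) :
    ∑ I : Fin 6 → Fin 3, ((∏ k : Fin 6, pauli (I k) (x k.castSucc) (y k.castSucc)) *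
        ∏ k : Fin 6, pauli (I k) (u k.castSucc) (v k.castSucc))
      = ∏ k : Fin 6, S (x k.castSucc) (y k.castSucc) (u k.castSucc) (v k.castSucc) := by
  simp only [← Finset.prod_mul_distrib, S]
  rw [Finset.prod_univ_sum, Fintype.piFinset_univ]

lemma snoc_pauli (I : Fin 6 → Fin 3) (j : Fin 3) :
    Fin.snoc (fun k : Fin 6 => pauli (I k)) (pauli j) = fun k => pauli ((Fin.snoc I j : Fin 7 → Fin 3) k) := by
  funext k
  refine Fin.lastCases ?_ (fun i => ?_) k <;> simp only [Fin.snoc_last, Fin.snoc_castSucc]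

lemma key (α₁ α₂ α₃ α₄ : ℝ) (j j' : Fin 3) :
    RtR7 α₁ α₂ α₃ α₄ j j' =
      (∑ a : Fin 4, ∑ b : Fin 4, ∑ c : Fin 4, ∑ d : Fin 4,
        ((vv α₁ α₂ α₃ α₄ a * vv α₁ α₂ α₃ α₄ b * vv α₁ α₂ α₃ α₄ c * vv α₁ α₂ α₃ α₄ d : ℝ) : ℂ) *
        ((∏ k : Fin 6, S (wv b k.castSucc) (wv a k.castSucc) (wv d k.castSucc) (wv c k.castSucc)) *
         (pauli j (wv b (Fin.last 6)) (wv a (Fin.last 6)) *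
          pauli j' (wv d (Fin.last 6)) (wv c (Fin.last 6))))).re := by
  have hR : ∀ (I : Fin 6 → Fin 3) (j : Fin 3), Rmat7 α₁ α₂ α₃ α₄ I j =
      (Matrix.trace (rho7 α₁ α₂ α₃ α₄ * kron (fun k => pauli ((Fin.snoc I j : Fin 7 → Fin 3) k)))).re := by
    intro I j; rw [Rmat7, snoc_pauli]
  have him := trace_im α₁ α₂ α₃ α₄
  have step1 : RtR7 α₁ α₂ α₃ α₄ j j' =
      (∑ I : Fin 6 → Fin 3,
        Matrix.trace (rho7 α₁ α₂ α₃ α₄ * kron (fun k => pauli ((Fin.snoc I j : Fin 7 → Fin 3) k))) *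
        Matrix.trace (rho7 α₁ α₂ α₃ α₄ * kron (fun k => pauli ((Fin.snoc I j' : Fin 7 → Fin 3) k)))).re := by
    rw [RtR7, Complex.re_sum]
    simp only [Matrix.of_apply]
    refine Finset.sum_congr rfl fun I _ => ?_
    rw [hR, hR, Complex.mul_re, him, him]
    ring
  rw [step1]
  congr 1
  calc ∑ I : Fin 6 → Fin 3,
        Matrix.trace (rho7 α₁ α₂ α₃ α₄ * kron (fun k => pauli ((Fin.snoc I j : Fin 7 → Fin 3) k))) *
        Matrix.trace (rho7 α₁ α₂ α₃ α₄ * kron (fun k => pauli ((Fin.snoc I j' : Fin 7 → Fin 3) k)))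
      = ∑ I : Fin 6 → Fin 3, ∑ a : Fin 4, ∑ b : Fin 4, ∑ c : Fin 4, ∑ d : Fin 4,
          (((vv α₁ α₂ α₃ α₄ a * vv α₁ α₂ α₃ α₄ b : ℝ) : ℂ) *
            ∏ k : Fin 7, pauli ((Fin.snoc I j : Fin 7 → Fin 3) k) (wv b k) (wv a k)) *
          (((vv α₁ α₂ α₃ α₄ c * vv α₁ α₂ α₃ α₄ d : ℝ) : ℂ) *
            ∏ k : Fin 7, pauli ((Fin.snoc I j' : Fin 7 → Fin 3) k) (wv d k) (wv c k)) := by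
        refine Finset.sum_congr rfl fun I _ => ?_
        rw [trace_eq, trace_eq, Finset.sum_mul_sum]
        simp only [Finset.sum_mul, Finset.mul_sum]
        refine Finset.sum_congr rfl fun a _ => ?_
        refine (Finset.sum_congr rfl fun c _ => Finset.sum_comm).trans Finset.sum_comm
    _ = _ := by
        rw [sum_comm5]
        refine Finset.sum_congr rfl fun a _ => ?_
        refine Finset.sum_congr rfl fun b _ => ?_
        refine Finset.sum_congr rfl fun c _ => ?_
        refine Finset.sum_congr rfl fun d _ => ?_
        have hsplit : ∀ (j : Fin 3) (b a : Fin 4) (I : Fin 6 → Fin 3),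
            (∏ k : Fin 7, pauli ((Fin.snoc I j : Fin 7 → Fin 3) k) (wv b k) (wv a k)) =
            (∏ k : Fin 6, pauli (I k) (wv b k.castSucc) (wv a k.castSucc)) *
              pauli j (wv b (Fin.last 6)) (wv a (Fin.last 6)) := by
          intro j b a I
          rw [Fin.prod_univ_castSucc, Fin.snoc_last]
          simp
        calc ∑ I : Fin 6 → Fin 3,
              (((vv α₁ α₂ α₃ α₄ a * vv α₁ α₂ α₃ α₄ b : ℝ) : ℂ) *
                ∏ k : Fin 7, pauli ((Fin.snoc I j : Fin 7 → Fin 3) k) (wv b k) (wv a k)) *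
              (((vv α₁ α₂ α₃ α₄ c * vv α₁ α₂ α₃ α₄ d : ℝ) : ℂ) *
                ∏ k : Fin 7, pauli ((Fin.snoc I j' : Fin 7 → Fin 3) k) (wv d k) (wv c k))
            = ((vv α₁ α₂ α₃ α₄ a * vv α₁ α₂ α₃ α₄ b * vv α₁ α₂ α₃ α₄ c * vv α₁ α₂ α₃ α₄ d : ℝ) : ℂ) *
              ((∑ I : Fin 6 → Fin 3,
                (∏ k : Fin 6, pauli (I k) (wv b k.castSucc) (wv a k.castSucc)) *
                  ∏ k : Fin 6, pauli (I k) (wv d k.castSucc) (wv c k.castSucc)) *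
               (pauli j (wv b (Fin.last 6)) (wv a (Fin.last 6)) *
                pauli j' (wv d (Fin.last 6)) (wv c (Fin.last 6)))) := by
              conv_rhs => rw [Finset.sum_mul, Finset.mul_sum]
              refine Finset.sum_congr rfl fun I _ => ?_
              rw [hsplit, hsplit]
              push_cast
              ring
          _ = _ := by rw [sum_kron]

lemma wv_0_0 : wv 0 (((0 : Fin 6)).castSucc) = 0 := by decide
lemma wv_0_1 : wv 0 (((1 : Fin 6)).castSucc) = 0 := by decide
lemma wv_0_2 : wv 0 (((2 : Fin 6)).castSucc) = 0 := by decide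
lemma wv_0_3 : wv 0 (((3 : Fin 6)).castSucc) = 0 := by decide
lemma wv_0_4 : wv 0 (((4 : Fin 6)).castSucc) = 0 := by decide
lemma wv_0_5 : wv 0 (((5 : Fin 6)).castSucc) = 0 := by decide
lemma wv_0_last : wv 0 (Fin.last 6) = 0 := by decide
lemma wv_1_0 : wv 1 (((0 : Fin 6)).castSucc) = 0 := by decide
lemma wv_1_1 : wv 1 (((1 : Fin 6)).castSucc) = 0 := by decide
lemma wv_1_2 : wv 1 (((2 : Fin 6)).castSucc) = 0 := by decide
lemma wv_1_3 : wv 1 (((3 : Fin 6)).castSucc) = 1 := by decide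
lemma wv_1_4 : wv 1 (((4 : Fin 6)).castSucc) = 1 := by decide
lemma wv_1_5 : wv 1 (((5 : Fin 6)).castSucc) = 1 := by decide
lemma wv_1_last : wv 1 (Fin.last 6) = 1 := by decide
lemma wv_2_0 : wv 2 (((0 : Fin 6)).castSucc) = 1 := by decide
lemma wv_2_1 : wv 2 (((1 : Fin 6)).castSucc) = 1 := by decide
lemma wv_2_2 : wv 2 (((2 : Fin 6)).castSucc) = 1 := by decide
lemma wv_2_3 : wv 2 (((3 : Fin 6)).castSucc) = 1 := by decide
lemma wv_2_4 : wv 2 (((4 : Fin 6)).castSucc) = 0 := by decide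
lemma wv_2_5 : wv 2 (((5 : Fin 6)).castSucc) = 0 := by decide
lemma wv_2_last : wv 2 (Fin.last 6) = 0 := by decide
lemma wv_3_0 : wv 3 (((0 : Fin 6)).castSucc) = 1 := by decide
lemma wv_3_1 : wv 3 (((1 : Fin 6)).castSucc) = 1 := by decide
lemma wv_3_2 : wv 3 (((2 : Fin 6)).castSucc) = 1 := by decide
lemma wv_3_3 : wv 3 (((3 : Fin 6)).castSucc) = 0 := by decide
lemma wv_3_4 : wv 3 (((4 : Fin 6)).castSucc) = 1 := by decide
lemma wv_3_5 : wv 3 (((5 : Fin 6)).castSucc) = 1 := by decide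
lemma wv_3_last : wv 3 (Fin.last 6) = 1 := by decide
lemma S_0000 : S 0 0 0 0 = 1 := by norm_num [S, pauli, Fin.sum_univ_three, Matrix.cons_val_two, Matrix.vecHead, Matrix.vecTail]
lemma S_0001 : S 0 0 0 1 = 0 := by norm_num [S, pauli, Fin.sum_univ_three, Matrix.cons_val_two, Matrix.vecHead, Matrix.vecTail]
lemma S_0010 : S 0 0 1 0 = 0 := by norm_num [S, pauli, Fin.sum_univ_three, Matrix.cons_val_two, Matrix.vecHead, Matrix.vecTail]
lemma S_0011 : S 0 0 1 1 = (-1) := by norm_num [S, pauli, Fin.sum_univ_three, Matrix.cons_val_two, Matrix.vecHead, Matrix.vecTail]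
lemma S_0100 : S 0 1 0 0 = 0 := by norm_num [S, pauli, Fin.sum_univ_three, Matrix.cons_val_two, Matrix.vecHead, Matrix.vecTail]
lemma S_0101 : S 0 1 0 1 = 0 := by norm_num [S, pauli, Fin.sum_univ_three, Matrix.cons_val_two, Matrix.vecHead, Matrix.vecTail]
lemma S_0110 : S 0 1 1 0 = 2 := by norm_num [S, pauli, Fin.sum_univ_three, Matrix.cons_val_two, Matrix.vecHead, Matrix.vecTail]
lemma S_0111 : S 0 1 1 1 = 0 := by norm_num [S, pauli, Fin.sum_univ_three, Matrix.cons_val_two, Matrix.vecHead, Matrix.vecTail]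
lemma S_1000 : S 1 0 0 0 = 0 := by norm_num [S, pauli, Fin.sum_univ_three, Matrix.cons_val_two, Matrix.vecHead, Matrix.vecTail]
lemma S_1001 : S 1 0 0 1 = 2 := by norm_num [S, pauli, Fin.sum_univ_three, Matrix.cons_val_two, Matrix.vecHead, Matrix.vecTail]
lemma S_1010 : S 1 0 1 0 = 0 := by norm_num [S, pauli, Fin.sum_univ_three, Matrix.cons_val_two, Matrix.vecHead, Matrix.vecTail]
lemma S_1011 : S 1 0 1 1 = 0 := by norm_num [S, pauli, Fin.sum_univ_three, Matrix.cons_val_two, Matrix.vecHead, Matrix.vecTail]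
lemma S_1100 : S 1 1 0 0 = (-1) := by norm_num [S, pauli, Fin.sum_univ_three, Matrix.cons_val_two, Matrix.vecHead, Matrix.vecTail]
lemma S_1101 : S 1 1 0 1 = 0 := by norm_num [S, pauli, Fin.sum_univ_three, Matrix.cons_val_two, Matrix.vecHead, Matrix.vecTail]
lemma S_1110 : S 1 1 1 0 = 0 := by norm_num [S, pauli, Fin.sum_univ_three, Matrix.cons_val_two, Matrix.vecHead, Matrix.vecTail]
lemma S_1111 : S 1 1 1 1 = 1 := by norm_num [S, pauli, Fin.sum_univ_three, Matrix.cons_val_two, Matrix.vecHead, Matrix.vecTail]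
lemma pl_000 : pauli 0 0 0 = 0 := by simp [pauli]
lemma pl_001 : pauli 0 0 1 = 1 := by simp [pauli]
lemma pl_010 : pauli 0 1 0 = 1 := by simp [pauli]
lemma pl_011 : pauli 0 1 1 = 0 := by simp [pauli]
lemma pl_100 : pauli 1 0 0 = 0 := by simp [pauli]
lemma pl_101 : pauli 1 0 1 = (-Complex.I) := by simp [pauli]
lemma pl_110 : pauli 1 1 0 = Complex.I := by simp [pauli]
lemma pl_111 : pauli 1 1 1 = 0 := by simp [pauli]
lemma pl_200 : pauli 2 0 0 = 1 := by simp [pauli]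
lemma pl_201 : pauli 2 0 1 = 0 := by simp [pauli]
lemma pl_210 : pauli 2 1 0 = 0 := by simp [pauli]
lemma pl_211 : pauli 2 1 1 = (-1) := by simp [pauli]

set_option maxHeartbeats 1000000 in
lemma entry_00 (α₁ α₂ α₃ α₄ : ℝ) :
    RtR7 α₁ α₂ α₃ α₄ 0 0 = 16 * (α₁ ^ 2 + α₃ ^ 2) * (α₂ ^ 2 + α₄ ^ 2) + 48 * (α₁ ^ 2 * α₄ ^ 2 + α₂ ^ 2 * α₃ ^ 2) := by
  rw [key]
  simp only [Fin.sum_univ_four, Fin.prod_univ_six,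
    wv_0_0, wv_0_1, wv_0_2, wv_0_3, wv_0_4, wv_0_5, wv_0_last,
    wv_1_0, wv_1_1, wv_1_2, wv_1_3, wv_1_4, wv_1_5, wv_1_last,
    wv_2_0, wv_2_1, wv_2_2, wv_2_3, wv_2_4, wv_2_5, wv_2_last,
    wv_3_0, wv_3_1, wv_3_2, wv_3_3, wv_3_4, wv_3_5, wv_3_last,
    S_0000, S_0001, S_0010, S_0011, S_0100, S_0101, S_0110, S_0111,
    S_1000, S_1001, S_1010, S_1011, S_1100, S_1101, S_1110, S_1111,
    pl_000, pl_001, pl_010, pl_011, pl_100, pl_101, pl_110, pl_111,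
    pl_200, pl_201, pl_210, pl_211,
    mul_zero, zero_mul, mul_one, one_mul, add_zero, zero_add, mul_neg, neg_mul, neg_neg]
  norm_num [vv, Complex.ext_iff, Matrix.cons_val_two, Matrix.cons_val_three, Matrix.vecHead, Matrix.vecTail]
  ring

set_option maxHeartbeats 1000000 in
lemma entry_01 (α₁ α₂ α₃ α₄ : ℝ) :
    RtR7 α₁ α₂ α₃ α₄ 0 1 = 0 := by
  rw [key]
  simp only [Fin.sum_univ_four, Fin.prod_univ_six,
    wv_0_0, wv_0_1, wv_0_2, wv_0_3, wv_0_4, wv_0_5, wv_0_last,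
    wv_1_0, wv_1_1, wv_1_2, wv_1_3, wv_1_4, wv_1_5, wv_1_last,
    wv_2_0, wv_2_1, wv_2_2, wv_2_3, wv_2_4, wv_2_5, wv_2_last,
    wv_3_0, wv_3_1, wv_3_2, wv_3_3, wv_3_4, wv_3_5, wv_3_last,
    S_0000, S_0001, S_0010, S_0011, S_0100, S_0101, S_0110, S_0111,
    S_1000, S_1001, S_1010, S_1011, S_1100, S_1101, S_1110, S_1111,
    pl_000, pl_001, pl_010, pl_011, pl_100, pl_101, pl_110, pl_111,
    pl_200, pl_201, pl_210, pl_211,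
    mul_zero, zero_mul, mul_one, one_mul, add_zero, zero_add, mul_neg, neg_mul, neg_neg]
  norm_num [vv, Complex.ext_iff]
  try ring

set_option maxHeartbeats 1000000 in
lemma entry_02 (α₁ α₂ α₃ α₄ : ℝ) :
    RtR7 α₁ α₂ α₃ α₄ 0 2 = 0 := by
  rw [key]
  simp only [Fin.sum_univ_four, Fin.prod_univ_six,
    wv_0_0, wv_0_1, wv_0_2, wv_0_3, wv_0_4, wv_0_5, wv_0_last,
    wv_1_0, wv_1_1, wv_1_2, wv_1_3, wv_1_4, wv_1_5, wv_1_last,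
    wv_2_0, wv_2_1, wv_2_2, wv_2_3, wv_2_4, wv_2_5, wv_2_last,
    wv_3_0, wv_3_1, wv_3_2, wv_3_3, wv_3_4, wv_3_5, wv_3_last,
    S_0000, S_0001, S_0010, S_0011, S_0100, S_0101, S_0110, S_0111,
    S_1000, S_1001, S_1010, S_1011, S_1100, S_1101, S_1110, S_1111,
    pl_000, pl_001, pl_010, pl_011, pl_100, pl_101, pl_110, pl_111,
    pl_200, pl_201, pl_210, pl_211,
    mul_zero, zero_mul, mul_one, one_mul, add_zero, zero_add, mul_neg, neg_mul, neg_neg]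
  norm_num [vv, Complex.ext_iff]
  try ring

set_option maxHeartbeats 1000000 in
lemma entry_10 (α₁ α₂ α₃ α₄ : ℝ) :
    RtR7 α₁ α₂ α₃ α₄ 1 0 = 0 := by
  rw [key]
  simp only [Fin.sum_univ_four, Fin.prod_univ_six,
    wv_0_0, wv_0_1, wv_0_2, wv_0_3, wv_0_4, wv_0_5, wv_0_last,
    wv_1_0, wv_1_1, wv_1_2, wv_1_3, wv_1_4, wv_1_5, wv_1_last,
    wv_2_0, wv_2_1, wv_2_2, wv_2_3, wv_2_4, wv_2_5, wv_2_last,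
    wv_3_0, wv_3_1, wv_3_2, wv_3_3, wv_3_4, wv_3_5, wv_3_last,
    S_0000, S_0001, S_0010, S_0011, S_0100, S_0101, S_0110, S_0111,
    S_1000, S_1001, S_1010, S_1011, S_1100, S_1101, S_1110, S_1111,
    pl_000, pl_001, pl_010, pl_011, pl_100, pl_101, pl_110, pl_111,
    pl_200, pl_201, pl_210, pl_211,
    mul_zero, zero_mul, mul_one, one_mul, add_zero, zero_add, mul_neg, neg_mul, neg_neg]
  norm_num [vv, Complex.ext_iff]
  try ring

set_option maxHeartbeats 1000000 in
lemma entry_11 (α₁ α₂ α₃ α₄ : ℝ) :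
    RtR7 α₁ α₂ α₃ α₄ 1 1 = 16 * (α₁ ^ 2 + α₃ ^ 2) * (α₂ ^ 2 + α₄ ^ 2) + 48 * (α₁ ^ 2 * α₄ ^ 2 + α₂ ^ 2 * α₃ ^ 2) := by
  rw [key]
  simp only [Fin.sum_univ_four, Fin.prod_univ_six,
    wv_0_0, wv_0_1, wv_0_2, wv_0_3, wv_0_4, wv_0_5, wv_0_last,
    wv_1_0, wv_1_1, wv_1_2, wv_1_3, wv_1_4, wv_1_5, wv_1_last,
    wv_2_0, wv_2_1, wv_2_2, wv_2_3, wv_2_4, wv_2_5, wv_2_last,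
    wv_3_0, wv_3_1, wv_3_2, wv_3_3, wv_3_4, wv_3_5, wv_3_last,
    S_0000, S_0001, S_0010, S_0011, S_0100, S_0101, S_0110, S_0111,
    S_1000, S_1001, S_1010, S_1011, S_1100, S_1101, S_1110, S_1111,
    pl_000, pl_001, pl_010, pl_011, pl_100, pl_101, pl_110, pl_111,
    pl_200, pl_201, pl_210, pl_211,
    mul_zero, zero_mul, mul_one, one_mul, add_zero, zero_add, mul_neg, neg_mul, neg_neg]
  norm_num [vv, Complex.ext_iff, Matrix.cons_val_two, Matrix.cons_val_three, Matrix.vecHead, Matrix.vecTail]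
  ring

set_option maxHeartbeats 1000000 in
lemma entry_12 (α₁ α₂ α₃ α₄ : ℝ) :
    RtR7 α₁ α₂ α₃ α₄ 1 2 = 0 := by
  rw [key]
  simp only [Fin.sum_univ_four, Fin.prod_univ_six,
    wv_0_0, wv_0_1, wv_0_2, wv_0_3, wv_0_4, wv_0_5, wv_0_last,
    wv_1_0, wv_1_1, wv_1_2, wv_1_3, wv_1_4, wv_1_5, wv_1_last,
    wv_2_0, wv_2_1, wv_2_2, wv_2_3, wv_2_4, wv_2_5, wv_2_last,
    wv_3_0, wv_3_1, wv_3_2, wv_3_3, wv_3_4, wv_3_5, wv_3_last,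
    S_0000, S_0001, S_0010, S_0011, S_0100, S_0101, S_0110, S_0111,
    S_1000, S_1001, S_1010, S_1011, S_1100, S_1101, S_1110, S_1111,
    pl_000, pl_001, pl_010, pl_011, pl_100, pl_101, pl_110, pl_111,
    pl_200, pl_201, pl_210, pl_211,
    mul_zero, zero_mul, mul_one, one_mul, add_zero, zero_add, mul_neg, neg_mul, neg_neg]
  norm_num [vv, Complex.ext_iff]
  try ring

set_option maxHeartbeats 1000000 in
lemma entry_20 (α₁ α₂ α₃ α₄ : ℝ) :
    RtR7 α₁ α₂ α₃ α₄ 2 0 = 0 := by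
  rw [key]
  simp only [Fin.sum_univ_four, Fin.prod_univ_six,
    wv_0_0, wv_0_1, wv_0_2, wv_0_3, wv_0_4, wv_0_5, wv_0_last,
    wv_1_0, wv_1_1, wv_1_2, wv_1_3, wv_1_4, wv_1_5, wv_1_last,
    wv_2_0, wv_2_1, wv_2_2, wv_2_3, wv_2_4, wv_2_5, wv_2_last,
    wv_3_0, wv_3_1, wv_3_2, wv_3_3, wv_3_4, wv_3_5, wv_3_last,
    S_0000, S_0001, S_0010, S_0011, S_0100, S_0101, S_0110, S_0111,
    S_1000, S_1001, S_1010, S_1011, S_1100, S_1101, S_1110, S_1111,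
    pl_000, pl_001, pl_010, pl_011, pl_100, pl_101, pl_110, pl_111,
    pl_200, pl_201, pl_210, pl_211,
    mul_zero, zero_mul, mul_one, one_mul, add_zero, zero_add, mul_neg, neg_mul, neg_neg]
  norm_num [vv, Complex.ext_iff]
  try ring

set_option maxHeartbeats 1000000 in
lemma entry_21 (α₁ α₂ α₃ α₄ : ℝ) :
    RtR7 α₁ α₂ α₃ α₄ 2 1 = 0 := by
  rw [key]
  simp only [Fin.sum_univ_four, Fin.prod_univ_six,
    wv_0_0, wv_0_1, wv_0_2, wv_0_3, wv_0_4, wv_0_5, wv_0_last,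
    wv_1_0, wv_1_1, wv_1_2, wv_1_3, wv_1_4, wv_1_5, wv_1_last,
    wv_2_0, wv_2_1, wv_2_2, wv_2_3, wv_2_4, wv_2_5, wv_2_last,
    wv_3_0, wv_3_1, wv_3_2, wv_3_3, wv_3_4, wv_3_5, wv_3_last,
    S_0000, S_0001, S_0010, S_0011, S_0100, S_0101, S_0110, S_0111,
    S_1000, S_1001, S_1010, S_1011, S_1100, S_1101, S_1110, S_1111,
    pl_000, pl_001, pl_010, pl_011, pl_100, pl_101, pl_110, pl_111,
    pl_200, pl_201, pl_210, pl_211,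
    mul_zero, zero_mul, mul_one, one_mul, add_zero, zero_add, mul_neg, neg_mul, neg_neg]
  norm_num [vv, Complex.ext_iff]
  try ring

set_option maxHeartbeats 1000000 in
lemma entry_22 (α₁ α₂ α₃ α₄ : ℝ) (hnorm : α₁ ^ 2 + α₂ ^ 2 + α₃ ^ 2 + α₄ ^ 2 = 1) :
    RtR7 α₁ α₂ α₃ α₄ 2 2 = 1 + 32 * α₁ ^ 2 * α₃ ^ 2 + 32 * α₂ ^ 2 * α₄ ^ 2 := by
  rw [key]
  simp only [Fin.sum_univ_four, Fin.prod_univ_six,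
    wv_0_0, wv_0_1, wv_0_2, wv_0_3, wv_0_4, wv_0_5, wv_0_last,
    wv_1_0, wv_1_1, wv_1_2, wv_1_3, wv_1_4, wv_1_5, wv_1_last,
    wv_2_0, wv_2_1, wv_2_2, wv_2_3, wv_2_4, wv_2_5, wv_2_last,
    wv_3_0, wv_3_1, wv_3_2, wv_3_3, wv_3_4, wv_3_5, wv_3_last,
    S_0000, S_0001, S_0010, S_0011, S_0100, S_0101, S_0110, S_0111,
    S_1000, S_1001, S_1010, S_1011, S_1100, S_1101, S_1110, S_1111,
    pl_000, pl_001, pl_010, pl_011, pl_100, pl_101, pl_110, pl_111,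
    pl_200, pl_201, pl_210, pl_211,
    mul_zero, zero_mul, mul_one, one_mul, add_zero, zero_add, mul_neg, neg_mul, neg_neg]
  norm_num [vv, Complex.ext_iff, Matrix.cons_val_two, Matrix.cons_val_three, Matrix.vecHead, Matrix.vecTail]
  linear_combination (1 + α₁ ^ 2 + α₂ ^ 2 + α₃ ^ 2 + α₄ ^ 2) * hnorm

/-- For the seven-qubit state `|ψ⟩₇` with `α₁²+α₂²+α₃²+α₄² = 1`, the matrix `R†R` is
diagonal with `(R†R)₁₁ = (R†R)₂₂ = 16(α₁²+α₃²)(α₂²+α₄²) + 48(α₁²α₄²+α₂²α₃²)` and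
`(R†R)₃₃ = 1 + 32α₁²α₃² + 32α₂²α₄²`. -/
theorem RtR7_diagonal (α₁ α₂ α₃ α₄ : ℝ)
    (hnorm : α₁ ^ 2 + α₂ ^ 2 + α₃ ^ 2 + α₄ ^ 2 = 1) :
    RtR7 α₁ α₂ α₃ α₄ =
      !![16 * (α₁ ^ 2 + α₃ ^ 2) * (α₂ ^ 2 + α₄ ^ 2)
           + 48 * (α₁ ^ 2 * α₄ ^ 2 + α₂ ^ 2 * α₃ ^ 2), 0, 0;
         0, 16 * (α₁ ^ 2 + α₃ ^ 2) * (α₂ ^ 2 + α₄ ^ 2)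
           + 48 * (α₁ ^ 2 * α₄ ^ 2 + α₂ ^ 2 * α₃ ^ 2), 0;
         0, 0, 1 + 32 * α₁ ^ 2 * α₃ ^ 2 + 32 * α₂ ^ 2 * α₄ ^ 2] := by
  ext j j'
  fin_cases j <;> fin_cases j' <;>
    simp only [Matrix.cons_val', Matrix.cons_val_zero, Matrix.cons_val_one, Matrix.head_cons,
      Matrix.head_fin_const, Matrix.empty_val', Matrix.cons_val_fin_one, Fin.mk_zero,
      Fin.mk_one, Matrix.of_apply]
  · exact entry_00 α₁ α₂ α₃ α₄
  · exact entry_01 α₁ α₂ α₃ α₄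
  · exact entry_02 α₁ α₂ α₃ α₄
  · exact entry_10 α₁ α₂ α₃ α₄
  · exact entry_11 α₁ α₂ α₃ α₄
  · exact entry_12 α₁ α₂ α₃ α₄
  · exact entry_20 α₁ α₂ α₃ α₄
  · exact entry_21 α₁ α₂ α₃ α₄
  · exact entry_22 α₁ α₂ α₃ α₄ hnorm
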